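/- Let k be a perfect field of characteristic p > 0 and let A ⊆ B be a homogeneous integral extension of positively ℕ-graded Noetherian k-domains of Krull dimension two, where A is integrally closed in its fraction field and contains a nonzero homogeneous element of degree 1. Suppose the induced extension of fraction fields Quot(A) ⊆ Quot(B) is purely inseparable of degree p^e. Then for every b ∈ B, the element b^{p^e} lies in A, and moreover lies in the p^e-th Veronese subring A^{(p^e)}; that is, B^{p^e} ⊆ A^{(p^e)}. -/

import Mathlib

open DirectSum

theorem decompose_map_of_graded {k A B : Type*} [CommSemiring k]
    [CommRing A] [CommRing B] [Algebra k A] [Algebra k B]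
    (𝒜 : ℕ → Submodule k A) [GradedAlgebra 𝒜]
    (ℬ : ℕ → Submodule k B) [GradedAlgebra ℬ]
    (f : A →+* B) (hf : ∀ i : ℕ, ∀ a ∈ 𝒜 i, f a ∈ ℬ i) (a : A) (i : ℕ) :
    (DirectSum.decompose ℬ (f a) i : B) = f (DirectSum.decompose 𝒜 a i : A) := by
  induction a using DirectSum.Decomposition.inductionOn 𝒜 with
  | zero => simp
  | @homogeneous j x =>
    rcases eq_or_ne i j with rfl | hij
    · rw [DirectSum.decompose_of_mem_same ℬ (hf i x x.2),
        DirectSum.decompose_of_mem_same 𝒜 x.2]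
    · rw [DirectSum.decompose_of_mem_ne ℬ (hf j x x.2) (Ne.symm hij),
        DirectSum.decompose_of_mem_ne 𝒜 x.2 (Ne.symm hij), map_zero]
  | add y z hy hz =>
    simp only [map_add, DirectSum.decompose_add, DirectSum.add_apply,
      Submodule.coe_add, hy, hz]

/-- Let `k` be a perfect field of characteristic `p > 0` and `A ⊆ B` a
homogeneous integral extension of positively ℕ-graded Noetherian `k`-domains of
Krull dimension two, with `A` normal and containing a nonzero element of degree
one.  If the extension of fraction fields is purely inseparable of degree
`p ^ e`, then every `b ^ p ^ e` (for `b ∈ B`) lies in the `p^e`-th Veronese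
subring of `A`. -/
theorem frobenius_pow_mem_veronese_of_purely_inseparable
    (k : Type*) [Field k] (p : ℕ) [Fact p.Prime] [CharP k p] [PerfectField k]
    (A B : Type*) [CommRing A] [CommRing B] [IsDomain A] [IsDomain B]
    [IsNoetherianRing A] [IsNoetherianRing B]
    [Algebra k A] [Algebra k B] [Algebra A B] [IsScalarTower k A B]
    (𝒜 : ℕ → Submodule k A) [GradedAlgebra 𝒜]
    (ℬ : ℕ → Submodule k B) [GradedAlgebra ℬ]
    (hinj : Function.Injective (algebraMap A B))
    (hhom : ∀ i : ℕ, ∀ a ∈ 𝒜 i, algebraMap A B a ∈ ℬ i)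
    [Algebra.IsIntegral A B]
    (hdimA : ringKrullDim A = 2) (hdimB : ringKrullDim B = 2)
    [IsIntegrallyClosed A]
    (x : A) (hx1 : x ∈ 𝒜 1) (hx0 : x ≠ 0)
    (φ : FractionRing A →+* FractionRing B)
    (hφ : ∀ a : A, φ (algebraMap A (FractionRing A) a) =
      algebraMap B (FractionRing B) (algebraMap A B a))
    (hpins : ∀ y : FractionRing B, ∃ m : ℕ, y ^ p ^ m ∈ φ.fieldRange)
    (e : ℕ) (hdeg : Module.finrank φ.fieldRange (FractionRing B) = p ^ e) :
    ∀ b : B, ∃ a : A,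
      (∀ i : ℕ, ¬ p ^ e ∣ i → (DirectSum.decompose 𝒜 a i : A) = 0) ∧
      algebraMap A B a = b ^ p ^ e := by
  have hp : p.Prime := Fact.out
  haveI : CharP B p := charP_of_injective_algebraMap (algebraMap k B).injective p
  haveI : CharP (FractionRing B) p :=
    charP_of_injective_algebraMap (IsFractionRing.injective B _) p
  haveI : CharP φ.fieldRange p := inferInstance
  haveI : ExpChar φ.fieldRange p := ExpChar.prime hp
  -- purely inseparable
  haveI hPI : IsPurelyInseparable φ.fieldRange (FractionRing B) := by
    rw [isPurelyInseparable_iff_pow_mem φ.fieldRange p]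
    intro y
    obtain ⟨m, hm⟩ := hpins y
    exact ⟨m, ⟨⟨_, hm⟩, rfl⟩⟩
  haveI : FiniteDimensional φ.fieldRange (FractionRing B) :=
    FiniteDimensional.of_finrank_pos (by rw [hdeg]; exact pow_pos hp.pos e)
  -- key field fact: y ^ p ^ e ∈ K for all y
  have key : ∀ y : FractionRing B, y ^ p ^ e ∈ φ.fieldRange := by
    intro y
    obtain ⟨m, c, hc⟩ := IsPurelyInseparable.minpoly_eq_X_pow_sub_C φ.fieldRange p y
    have hint : IsIntegral φ.fieldRange y := Algebra.IsIntegral.isIntegral y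
    have hdvd : p ^ m ∣ p ^ e := by
      have := minpoly.degree_dvd hint
      rwa [hc, Polynomial.natDegree_X_pow_sub_C, hdeg] at this
    obtain ⟨m', rfl⟩ : ∃ m', e = m + m' := by
      rcases (Nat.pow_dvd_pow_iff_le_right hp.one_lt).1 hdvd with h
      exact ⟨e - m, (Nat.add_sub_cancel' h).symm⟩
    have h0 : y ^ p ^ m = algebraMap φ.fieldRange _ c := by
      have := minpoly.aeval φ.fieldRange y
      rw [hc] at this
      simpa [sub_eq_zero] using this
    rw [pow_add, pow_mul, h0, ← map_pow]
    exact Subtype.coe_prop (c ^ p ^ m')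
  intro b
  -- b ^ p ^ e comes from A
  have hbK := key (algebraMap B (FractionRing B) b)
  rw [← map_pow] at hbK
  obtain ⟨q, hq⟩ := hbK
  -- q is integral over A
  have hqint : IsIntegral A q := by
    obtain ⟨f, hf, hfeval⟩ := Algebra.IsIntegral.isIntegral (R := A) (b ^ p ^ e)
    refine ⟨f, hf, ?_⟩
    have hφinj : Function.Injective φ := φ.injective
    apply hφinj
    rw [map_zero, Polynomial.hom_eval₂]
    have h2 : φ.comp (algebraMap A (FractionRing A))
        = (algebraMap B (FractionRing B)).comp (algebraMap A B) := RingHom.ext hφ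
    rw [h2, hq, ← Polynomial.hom_eval₂, hfeval, map_zero]
  obtain ⟨a, ha⟩ := IsIntegrallyClosed.isIntegral_iff.mp hqint
  -- algebraMap A B a = b ^ p ^ e
  have hab : algebraMap A B a = b ^ p ^ e := by
    apply IsFractionRing.injective B (FractionRing B)
    rw [← hφ a, ha, hq, map_pow]
  refine ⟨a, ?_, hab⟩
  -- graded part
  intro i hi
  apply hinj
  rw [map_zero, ← decompose_map_of_graded 𝒜 ℬ (algebraMap A B) hhom, hab]
  -- show decompose ℬ (b ^ p ^ e) i = 0
  clear hq hab ha hqint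
  induction b using DirectSum.Decomposition.inductionOn ℬ with
  | zero =>
    rw [zero_pow (pow_ne_zero e hp.ne_zero)]
    simp
  | @homogeneous j y =>
    have hmem : (y : B) ^ p ^ e ∈ ℬ (p ^ e • j) := SetLike.pow_mem_graded _ y.2
    rw [smul_eq_mul] at hmem
    have hne : p ^ e * j ≠ i := fun h => hi ⟨j, h.symm⟩
    exact DirectSum.decompose_of_mem_ne ℬ hmem hne
  | add y z hy hz =>
    rw [add_pow_char_pow, DirectSum.decompose_add, DirectSum.add_apply,
      Submodule.coe_add, hy, hz, add_zero]
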